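/- Let T > 0 and let λ : (0,T] → (0,∞) satisfy λ(t)² ≤ K·Λ(t) and λ(t) ≤ L for all t ∈ (0,T], where Λ(t) := ∫₀ᵗ λ(s) ds and K, L > 0. Then there exists a constant C = C(K,L) > 0 such that for every N ≥ 1, every t ∈ (0,T], and every real r ≥ e with Λ(t)·r ≥ N·ln r, one has (λ(t)/Λ(t))·ln(1/Λ(t)) ≤ C·r. -/

import Mathlib

/-- `Λ(t) = ∫₀ᵗ λ(s) ds`. -/
noncomputable def Lam (lam : ℝ → ℝ) (t : ℝ) : ℝ := ∫ s in (0:ℝ)..t, lam s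

/-- The key pointwise inequality of Proposition 2.6 (2), (5): on the hyperbolic zone
`Λ(t)·r ≥ N·ln r` (with `r` abstracting `⟨x⟩⟨ξ⟩`), one has
`(λ(t)/Λ(t))·ln(1/Λ(t)) ≤ C·r` with `C = C(K,L)`. -/
theorem hyperbolic_zone_key_inequality
    (T : ℝ) (hT : 0 < T) (lam : ℝ → ℝ) (K L : ℝ) (hK : 0 < K) (hL : 0 < L)
    (hpos : ∀ t ∈ Set.Ioc 0 T, 0 < lam t)
    (hKb : ∀ t ∈ Set.Ioc 0 T, lam t ^ 2 ≤ K * Lam lam t)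
    (hLb : ∀ t ∈ Set.Ioc 0 T, lam t ≤ L) :
    ∃ C : ℝ, 0 < C ∧ ∀ N : ℝ, 1 ≤ N → ∀ t ∈ Set.Ioc 0 T, ∀ r : ℝ, Real.exp 1 ≤ r →
      N * Real.log r ≤ Lam lam t * r →
      lam t / Lam lam t * Real.log (1 / Lam lam t) ≤ C * r := by
  refine ⟨2 * Real.sqrt K + 1, by positivity, ?_⟩
  intro N hN t ht r hr hzone
  have hl := hpos t ht
  have hK2 := hKb t ht
  have hΛ : 0 < Lam lam t := by nlinarith [sq_nonneg (lam t)]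
  have hr0 : (0:ℝ) < r := lt_of_lt_of_le (Real.exp_pos 1) hr
  have hr1 : (1:ℝ) ≤ r := le_trans (Real.one_le_exp (by norm_num)) hr
  by_cases h1 : 1 ≤ Lam lam t
  · have hlog : Real.log (1 / Lam lam t) ≤ 0 :=
      Real.log_nonpos (by positivity) (by rw [div_le_one hΛ]; exact h1)
    have : lam t / Lam lam t * Real.log (1 / Lam lam t) ≤ 0 :=
      mul_nonpos_of_nonneg_of_nonpos (by positivity) hlog
    nlinarith [Real.sqrt_nonneg K]
  · push_neg at h1
    set s := Real.sqrt (Lam lam t) with hsdef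
    have hs : 0 < s := Real.sqrt_pos.mpr hΛ
    have hs2 : s ^ 2 = Lam lam t := Real.sq_sqrt hΛ.le
    -- λ ≤ √K * s
    have hls : lam t ≤ Real.sqrt K * s := by
      have := Real.sqrt_le_sqrt hK2
      rwa [Real.sqrt_sq hl.le, Real.sqrt_mul hK.le] at this
    -- log(1/Λ) ≤ 2/s
    have hlog : Real.log (1 / Lam lam t) ≤ 2 / s := by
      have h15 : (1:ℝ) / Lam lam t = (1 / s) ^ 2 := by
        rw [div_pow, one_pow, hs2]
      rw [h15, Real.log_pow]
      have := Real.log_le_sub_one_of_pos (show (0:ℝ) < 1 / s by positivity)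
      have hs1 : 1 / s - 1 ≤ 1 / s := by linarith
      push_cast
      calc 2 * Real.log (1 / s) ≤ 2 * (1 / s) := by nlinarith
        _ = 2 / s := by ring
    -- r ≥ 1/Λ
    have hlogr : 1 ≤ Real.log r := by
      rw [Real.le_log_iff_exp_le hr0]; exact hr
    have hΛr : 1 ≤ Lam lam t * r := le_trans (le_trans hlogr (le_mul_of_one_le_left (by linarith) hN)) hzone
    have hlogpos : 0 ≤ Real.log (1 / Lam lam t) :=
      Real.log_nonneg (by rw [le_div_iff₀ hΛ]; linarith)
    have step1 : lam t / Lam lam t * Real.log (1 / Lam lam t)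
        ≤ (Real.sqrt K * s / Lam lam t) * (2 / s) := by
      apply mul_le_mul _ hlog hlogpos (by positivity)
      exact div_le_div_of_nonneg_right hls hΛ.le
    have step2 : (Real.sqrt K * s / Lam lam t) * (2 / s) = 2 * Real.sqrt K / Lam lam t := by
      field_simp
    have step3 : 2 * Real.sqrt K / Lam lam t ≤ 2 * Real.sqrt K * r := by
      rw [div_le_iff₀ hΛ]
      have hKs : 0 ≤ 2 * Real.sqrt K := by positivity
      nlinarith
    calc lam t / Lam lam t * Real.log (1 / Lam lam t)
        ≤ (Real.sqrt K * s / Lam lam t) * (2 / s) := step1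
      _ = 2 * Real.sqrt K / Lam lam t := step2
      _ ≤ 2 * Real.sqrt K * r := step3
      _ ≤ (2 * Real.sqrt K + 1) * r := by nlinarith
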